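/- Let ε > 0, N ≥ 1 an integer, K > 1, C₀ > 0, and let I ⊂ ℝ be an open interval. Let X, V, ξ₁,…,ξ_N, η₁,…,η_N : I → ℝ² be differentiable and E : I×ℝ² → ℝ² a map such that for all s ∈ I: X(s) ≠ ξ_β(s) for every β; |η_β(s)| ≤ C₀ for every β; X′(s) = V(s)/ε; V′(s) = V(s)^⊥/ε² + (1/ε)( E(s,X(s)) + Σ_{β=1}^N (X(s)−ξ_β(s))/|X(s)−ξ_β(s)|² ); and ξ_β′(s) = η_β(s)/ε for every β. Define the pointwise energy h(s) = |V(s)|²/2 + Σ_{β=1}^N ( |X(s)−ξ_β(s)| − ln|X(s)−ξ_β(s)| ) + K. Then h is differentiable on I and there exists a constant C > 0, depending only on N and C₀, such that for all s ∈ I: |h′(s)| ≤ C ε^{-1} ( √(h(s)) ( |E(s,X(s))| + 1 ) + Σ_{β=1}^N 1/|X(s)−ξ_β(s)| ). -/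

import Mathlib

open MeasureTheory Real Filter
open scoped ENNReal Topology
open scoped RealInnerProductSpace

noncomputable abbrev E2 := EuclideanSpace ℝ (Fin 2)

/-- Rotation by `π/2`: `(a₁, a₂)ᵖ = (-a₂, a₁)`. -/
noncomputable def perp (a : E2) : E2 :=
  (WithLp.equiv 2 (Fin 2 → ℝ)).symm ![-a 1, a 0]

lemma inner_perp_self (a : E2) : ⟪a, perp a⟫ = 0 := by
  simp [perp, PiLp.inner_apply, Fin.sum_univ_two]
  ring

lemma hasDerivAt_norm' {W : ℝ → E2} {W' : E2} {s : ℝ} (hW : HasDerivAt W W' s)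
    (hne : W s ≠ 0) :
    HasDerivAt (fun u => ‖W u‖) (‖W s‖⁻¹ * ⟪W s, W'⟫) s := by
  have h1 : HasDerivAt (fun u => ‖W u‖ ^ 2) (2 * ⟪W s, W'⟫) s := hW.norm_sq
  have hn : ‖W s‖ ≠ 0 := norm_ne_zero_iff.mpr hne
  have hpos : (0:ℝ) < ‖W s‖ ^ 2 := by positivity
  have h2 := (Real.hasDerivAt_sqrt hpos.ne').comp s h1
  simp only [Function.comp_def] at h2
  have heq : (fun u => Real.sqrt (‖W u‖ ^ 2)) = fun u => ‖W u‖ := by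
    funext u; rw [Real.sqrt_sq (norm_nonneg _)]
  rw [heq] at h2
  refine h2.congr_deriv ?_
  rw [Real.sqrt_sq (norm_nonneg _)]
  field_simp

lemma hasDerivAt_norm_sub_log {W : ℝ → E2} {W' : E2} {s : ℝ} (hW : HasDerivAt W W' s)
    (hne : W s ≠ 0) :
    HasDerivAt (fun u => ‖W u‖ - Real.log ‖W u‖)
      ((1 - ‖W s‖⁻¹) * (‖W s‖⁻¹ * ⟪W s, W'⟫)) s := by
  have hn : ‖W s‖ ≠ 0 := norm_ne_zero_iff.mpr hne
  have h1 := hasDerivAt_norm' hW hne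
  have h2 := h1.log hn
  refine (h1.sub h2).congr_deriv ?_
  field_simp

set_option maxHeartbeats 2000000 in
theorem stmt7 (N : ℕ) (hN : 1 ≤ N) (C₀ : ℝ) (hC₀ : 0 < C₀) :
    ∃ C : ℝ, 0 < C ∧
      ∀ (ε : ℝ), 0 < ε → ∀ (K : ℝ), 1 < K →
      ∀ (I : Set ℝ), IsOpen I → I.OrdConnected →
      ∀ (X V : ℝ → E2) (ξ η : Fin N → ℝ → E2) (E : ℝ → E2 → E2),
      (∀ s ∈ I, ∀ β, X s ≠ ξ β s) →
      (∀ s ∈ I, ∀ β, ‖η β s‖ ≤ C₀) →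
      (∀ s ∈ I, HasDerivAt X (ε⁻¹ • V s) s) →
      (∀ s ∈ I, HasDerivAt V ((ε ^ 2)⁻¹ • perp (V s) +
          ε⁻¹ • (E s (X s) + ∑ β, (‖X s - ξ β s‖ ^ 2)⁻¹ • (X s - ξ β s))) s) →
      (∀ β, ∀ s ∈ I, HasDerivAt (ξ β) (ε⁻¹ • η β s) s) →
      ∀ s ∈ I, ∃ d : ℝ,
        HasDerivAt (fun u => ‖V u‖ ^ 2 / 2
            + (∑ β, (‖X u - ξ β u‖ - Real.log ‖X u - ξ β u‖)) + K) d s ∧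
        |d| ≤ C * ε⁻¹ *
            (Real.sqrt (‖V s‖ ^ 2 / 2
                + (∑ β, (‖X s - ξ β s‖ - Real.log ‖X s - ξ β s‖)) + K)
              * (‖E s (X s)‖ + 1)
            + ∑ β, (‖X s - ξ β s‖)⁻¹) := by
  refine ⟨2 * N * (C₀ + 2), by positivity, ?_⟩
  intro ε hε K hK I hIopen hIconn X V ξ η E hne hη hX hV hξ s hs
  set r : Fin N → ℝ := fun β => ‖X s - ξ β s‖ with hr
  have hrpos : ∀ β, 0 < r β := fun β => norm_pos_iff.mpr (sub_ne_zero.mpr (hne s hs β))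
  -- derivative of each pair distance term
  have hWd : ∀ β, HasDerivAt (fun u => X u - ξ β u) (ε⁻¹ • (V s - η β s)) s := by
    intro β
    have := (hX s hs).sub (hξ β s hs)
    rwa [← smul_sub] at this
  have hterm : ∀ β, HasDerivAt (fun u => ‖X u - ξ β u‖ - Real.log ‖X u - ξ β u‖)
      ((1 - (r β)⁻¹) * ((r β)⁻¹ * ⟪X s - ξ β s, ε⁻¹ • (V s - η β s)⟫)) s := by
    intro β
    exact hasDerivAt_norm_sub_log (hWd β) (sub_ne_zero.mpr (hne s hs β))
  have hsum : HasDerivAt (fun u => ∑ β, (‖X u - ξ β u‖ - Real.log ‖X u - ξ β u‖))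
      (∑ β, (1 - (r β)⁻¹) * ((r β)⁻¹ * ⟪X s - ξ β s, ε⁻¹ • (V s - η β s)⟫)) s :=
    HasDerivAt.fun_sum (fun β _ => hterm β)
  set Vd : E2 := (ε ^ 2)⁻¹ • perp (V s) +
      ε⁻¹ • (E s (X s) + ∑ β, (‖X s - ξ β s‖ ^ 2)⁻¹ • (X s - ξ β s)) with hVd
  have hkin : HasDerivAt (fun u => ‖V u‖ ^ 2 / 2) (2 * ⟪V s, Vd⟫ / 2) s :=
    (hV s hs).norm_sq.div_const 2
  set d : ℝ := 2 * ⟪V s, Vd⟫ / 2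
      + ∑ β, (1 - (r β)⁻¹) * ((r β)⁻¹ * ⟪X s - ξ β s, ε⁻¹ • (V s - η β s)⟫) with hd
  refine ⟨d, (hkin.add hsum).add_const K, ?_⟩
  -- compute the inner product with the field
  have hinner : ⟪V s, Vd⟫ = ε⁻¹ * (⟪V s, E s (X s)⟫
      + ∑ β, ((r β) ^ 2)⁻¹ * ⟪V s, X s - ξ β s⟫) := by
    rw [hVd]
    rw [inner_add_right, real_inner_smul_right, inner_perp_self, real_inner_smul_right,
      inner_add_right, inner_sum]
    simp only [real_inner_smul_right]
    ring
  -- rewrite d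
  have hd2 : d = ε⁻¹ * (⟪V s, E s (X s)⟫
      + ∑ β, (((r β) ^ 2)⁻¹ * ⟪V s, X s - ξ β s⟫
          + (1 - (r β)⁻¹) * ((r β)⁻¹ * ⟪X s - ξ β s, V s - η β s⟫))) := by
    rw [hd, hinner]
    simp only [real_inner_smul_right]
    rw [show ∑ β, (1 - (r β)⁻¹) * ((r β)⁻¹ * (ε⁻¹ * ⟪X s - ξ β s, V s - η β s⟫))
        = ε⁻¹ * ∑ β, (1 - (r β)⁻¹) * ((r β)⁻¹ * ⟪X s - ξ β s, V s - η β s⟫) from by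
      rw [Finset.mul_sum]; exact Finset.sum_congr rfl fun β _ => by ring]
    rw [Finset.sum_add_distrib]
    ring
  -- bound each term
  have hTb : ∀ β, |((r β) ^ 2)⁻¹ * ⟪V s, X s - ξ β s⟫
      + (1 - (r β)⁻¹) * ((r β)⁻¹ * ⟪X s - ξ β s, V s - η β s⟫)|
      ≤ ‖V s‖ + C₀ + C₀ * (r β)⁻¹ := by
    intro β
    have hrp := hrpos β
    have hWV : |⟪X s - ξ β s, V s⟫| ≤ r β * ‖V s‖ := abs_real_inner_le_norm _ _
    have hWη : |⟪X s - ξ β s, η β s⟫| ≤ r β * C₀ := by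
      calc |⟪X s - ξ β s, η β s⟫| ≤ r β * ‖η β s‖ := abs_real_inner_le_norm _ _
        _ ≤ r β * C₀ := by nlinarith [hη s hs β]
    have key : ((r β) ^ 2)⁻¹ * ⟪V s, X s - ξ β s⟫
        + (1 - (r β)⁻¹) * ((r β)⁻¹ * ⟪X s - ξ β s, V s - η β s⟫)
        = (r β)⁻¹ * ⟪X s - ξ β s, V s⟫
          - ((r β)⁻¹ - ((r β) ^ 2)⁻¹) * ⟪X s - ξ β s, η β s⟫ := by
      rw [inner_sub_right, real_inner_comm (V s)]
      field_simp
      simp only [inner_sub_left, inner_sub_right, real_inner_comm (V s)]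
      ring
    rw [key]
    have h1 : |(r β)⁻¹ * ⟪X s - ξ β s, V s⟫| ≤ ‖V s‖ := by
      rw [abs_mul, abs_of_nonneg (by positivity : (0:ℝ) ≤ (r β)⁻¹)]
      calc (r β)⁻¹ * |⟪X s - ξ β s, V s⟫| ≤ (r β)⁻¹ * (r β * ‖V s‖) := by
            apply mul_le_mul_of_nonneg_left hWV (by positivity)
        _ = ‖V s‖ := by field_simp
    have h2 : |((r β)⁻¹ - ((r β) ^ 2)⁻¹) * ⟪X s - ξ β s, η β s⟫|
        ≤ C₀ + C₀ * (r β)⁻¹ := by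
      rw [abs_mul]
      have hb : |(r β)⁻¹ - ((r β) ^ 2)⁻¹| ≤ (r β)⁻¹ + ((r β) ^ 2)⁻¹ :=
        (abs_sub _ _).trans (by rw [abs_of_nonneg (by positivity), abs_of_nonneg (by positivity)])
      calc |(r β)⁻¹ - ((r β) ^ 2)⁻¹| * |⟪X s - ξ β s, η β s⟫|
          ≤ ((r β)⁻¹ + ((r β) ^ 2)⁻¹) * (r β * C₀) := by
            exact mul_le_mul hb hWη (abs_nonneg _) (by positivity)
        _ = C₀ + C₀ * (r β)⁻¹ := by field_simp
    calc |(r β)⁻¹ * ⟪X s - ξ β s, V s⟫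
          - ((r β)⁻¹ - ((r β) ^ 2)⁻¹) * ⟪X s - ξ β s, η β s⟫|
        ≤ |(r β)⁻¹ * ⟪X s - ξ β s, V s⟫|
          + |((r β)⁻¹ - ((r β) ^ 2)⁻¹) * ⟪X s - ξ β s, η β s⟫| := abs_sub _ _
      _ ≤ ‖V s‖ + (C₀ + C₀ * (r β)⁻¹) := add_le_add h1 h2
      _ = ‖V s‖ + C₀ + C₀ * (r β)⁻¹ := by ring
  -- set up h and its basic bounds
  set hE : ℝ := ‖V s‖ ^ 2 / 2 + (∑ β, (r β - Real.log (r β))) + K with hhE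
  have hterm1 : ∀ β, (1:ℝ) ≤ r β - Real.log (r β) := by
    intro β
    have := Real.log_le_sub_one_of_pos (hrpos β)
    linarith
  have hhE1 : 1 ≤ hE := by
    have hsum1 : (N:ℝ) ≤ ∑ β, (r β - Real.log (r β)) := by
      calc (N:ℝ) = ∑ _β : Fin N, (1:ℝ) := by simp
        _ ≤ _ := Finset.sum_le_sum (fun β _ => hterm1 β)
    have hN1 : (1:ℝ) ≤ (N:ℝ) := by exact_mod_cast hN
    rw [hhE]
    nlinarith [sq_nonneg ‖V s‖]
  have hsqrt1 : 1 ≤ Real.sqrt hE := by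
    rw [show (1:ℝ) = Real.sqrt 1 by simp]
    exact Real.sqrt_le_sqrt hhE1
  have hVle : ‖V s‖ ≤ 2 * Real.sqrt hE := by
    have h1 : ‖V s‖ ^ 2 ≤ 4 * hE := by
      have hsum0 : (0:ℝ) ≤ ∑ β, (r β - Real.log (r β)) :=
        Finset.sum_nonneg (fun β _ => by linarith [hterm1 β])
      rw [hhE]
      nlinarith
    have h2 : ‖V s‖ ≤ Real.sqrt (4 * hE) := by
      rw [← Real.sqrt_sq (norm_nonneg (V s))]
      exact Real.sqrt_le_sqrt h1
    calc ‖V s‖ ≤ Real.sqrt (4 * hE) := h2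
      _ = 2 * Real.sqrt hE := by
          rw [show (4:ℝ) * hE = 2^2 * hE by ring, Real.sqrt_mul (by positivity), Real.sqrt_sq]
          norm_num
  -- assemble
  have hdabs : |d| ≤ ε⁻¹ * (‖V s‖ * ‖E s (X s)‖ + (N * ‖V s‖ + N * C₀ + C₀ * ∑ β, (r β)⁻¹)) := by
    rw [hd2, abs_mul, abs_of_nonneg (by positivity : (0:ℝ) ≤ ε⁻¹)]
    refine mul_le_mul_of_nonneg_left ?_ (by positivity)
    calc |⟪V s, E s (X s)⟫ + ∑ β, (((r β) ^ 2)⁻¹ * ⟪V s, X s - ξ β s⟫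
            + (1 - (r β)⁻¹) * ((r β)⁻¹ * ⟪X s - ξ β s, V s - η β s⟫))|
        ≤ |⟪V s, E s (X s)⟫| + |∑ β, (((r β) ^ 2)⁻¹ * ⟪V s, X s - ξ β s⟫
            + (1 - (r β)⁻¹) * ((r β)⁻¹ * ⟪X s - ξ β s, V s - η β s⟫))| := abs_add_le _ _
      _ ≤ ‖V s‖ * ‖E s (X s)‖ + ∑ β, (‖V s‖ + C₀ + C₀ * (r β)⁻¹) := by
          refine add_le_add (abs_real_inner_le_norm _ _) ?_
          exact (Finset.abs_sum_le_sum_abs _ _).trans (Finset.sum_le_sum (fun β _ => hTb β))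
      _ = ‖V s‖ * ‖E s (X s)‖ + (N * ‖V s‖ + N * C₀ + C₀ * ∑ β, (r β)⁻¹) := by
          rw [Finset.sum_add_distrib, Finset.sum_add_distrib, Finset.sum_const,
            ← Finset.mul_sum]
          simp [nsmul_eq_mul]
  refine hdabs.trans ?_
  rw [show (2 * (N:ℝ) * (C₀ + 2)) * ε⁻¹ * (Real.sqrt hE * (‖E s (X s)‖ + 1) + ∑ β, (r β)⁻¹)
      = ε⁻¹ * ((2 * N * (C₀ + 2)) * (Real.sqrt hE * (‖E s (X s)‖ + 1) + ∑ β, (r β)⁻¹)) by ring]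
  refine mul_le_mul_of_nonneg_left ?_ (by positivity)
  have hE0 : (0:ℝ) ≤ ‖E s (X s)‖ := norm_nonneg _
  have hSum0 : (0:ℝ) ≤ ∑ β, (r β)⁻¹ :=
    Finset.sum_nonneg (fun β _ => by positivity)
  have hN1 : (1:ℝ) ≤ (N:ℝ) := by exact_mod_cast hN
  have hS0 : (0:ℝ) ≤ Real.sqrt hE := Real.sqrt_nonneg hE
  have hSQ : (0:ℝ) ≤ Real.sqrt hE * ‖E s (X s)‖ := mul_nonneg hS0 hE0
  set S := Real.sqrt hE with hS
  set Q := ‖E s (X s)‖ with hQ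
  set Sm := ∑ β, (r β)⁻¹ with hSmdef
  have a1 : ‖V s‖ * Q ≤ 2 * (S * Q) := by
    rw [show 2 * (S * Q) = (2 * S) * Q by ring]
    exact mul_le_mul_of_nonneg_right hVle hE0
  have a2 : (N:ℝ) * ‖V s‖ ≤ 2 * N * S := by
    rw [show 2 * (N:ℝ) * S = N * (2 * S) by ring]
    exact mul_le_mul_of_nonneg_left hVle (by positivity)
  have a3 : (N:ℝ) * C₀ ≤ N * C₀ * S :=
    le_mul_of_one_le_right (by positivity) hsqrt1
  have a4 : 2 * (S * Q) ≤ 2 * N * (C₀ + 2) * (S * Q) :=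
    mul_le_mul_of_nonneg_right (by nlinarith) hSQ
  have b1 : 2 * (N:ℝ) * S + N * C₀ * S ≤ 2 * N * (C₀ + 2) * S := by
    rw [show 2 * (N:ℝ) * S + N * C₀ * S = (2 * N + N * C₀) * S by ring]
    exact mul_le_mul_of_nonneg_right (by nlinarith) hS0
  have b2 : C₀ * Sm ≤ 2 * N * (C₀ + 2) * Sm :=
    mul_le_mul_of_nonneg_right (by nlinarith) hSum0
  rw [show 2 * (N:ℝ) * (C₀ + 2) * (S * (Q + 1) + Sm)
      = 2 * N * (C₀ + 2) * (S * Q) + 2 * N * (C₀ + 2) * S + 2 * N * (C₀ + 2) * Sm by ring]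
  linarith
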